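/- Let A = [a_{ij}] and B = [b_{ij}] be m×n binary matrices, let 1 ≤ p₁ < p₂ < ⋯ < p_s ≤ m and 1 ≤ q₁ < q₂ < ⋯ < q_t ≤ n, and let C = [a_{p_i q_j}] and D = [b_{p_i q_j}] be the corresponding s×t submatrices of A and B taken on the same rows and the same columns. For every positive integer k, if G^k(C,D) is not word-representable, then G^k(A,B) is not word-representable. -/

import Mathlib

/-- A word `w` over alphabet `V` represents the graph `G`: every vertex occurs in `w`,
and two distinct vertices are adjacent iff their letters alternate in `w`. -/
def WordRepresents {V : Type*} [DecidableEq V] (w : List V) (G : SimpleGraph V) : Prop :=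
  (∀ v : V, v ∈ w) ∧
  ∀ x y : V, x ≠ y →
    (G.Adj x y ↔ (w.filter (fun z => z == x || z == y)).Chain' (· ≠ ·))

/-- A graph is word-representable if some word represents it. -/
def WordRepresentable {V : Type*} [DecidableEq V] (G : SimpleGraph V) : Prop :=
  ∃ w : List V, WordRepresents w G

/-- The split graph `G(M)` of an `m × n` binary matrix `M`: vertices `Sum.inl j`
(`j : Fin n`) form a clique, vertices `Sum.inr i` (`i : Fin m`) form an independent set,
and `Sum.inr i` is adjacent to `Sum.inl j` iff `M i j = true`. -/
def splitGraph {m n : ℕ} (M : Fin m → Fin n → Bool) : SimpleGraph (Fin n ⊕ Fin m) :=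
  SimpleGraph.fromRel (fun x y =>
    match x, y with
    | Sum.inl _, Sum.inl _ => True
    | Sum.inl j, Sum.inr i => M i j = true
    | _, _ => False)

/-- `morphIter A B k` is the matrix `M^k(A,B)`, obtained from the `1 × 1` matrix `[0]`
by `k` iterations of the 2-dimensional morphism replacing `0` by the block `A`
and `1` by the block `B`. -/
def morphIter {m n : ℕ} (A B : Fin m → Fin n → Bool) :
    (k : ℕ) → Fin (m ^ k) → Fin (n ^ k) → Bool
  | 0, _, _ => false
  | k + 1, i, j =>
    have hm : 0 < m := Nat.pos_of_ne_zero (fun h => by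
      have := i.isLt; simp [h] at this)
    have hn : 0 < n := Nat.pos_of_ne_zero (fun h => by
      have := j.isLt; simp [h] at this)
    have hR : i.val / m < m ^ k :=
      (Nat.div_lt_iff_lt_mul hm).2 (by rw [← pow_succ]; exact i.isLt)
    have hC : j.val / n < n ^ k :=
      (Nat.div_lt_iff_lt_mul hn).2 (by rw [← pow_succ]; exact j.isLt)
    if morphIter A B k ⟨i.val / m, hR⟩ ⟨j.val / n, hC⟩ then
      B ⟨i.val % m, Nat.mod_lt _ hm⟩ ⟨j.val % n, Nat.mod_lt _ hn⟩
    else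
      A ⟨i.val % m, Nat.mod_lt _ hm⟩ ⟨j.val % n, Nat.mod_lt _ hn⟩

/-- `Gk A B k` is the split graph `G^k(A,B) = G(M^k(A,B))`. -/
def Gk {m n : ℕ} (A B : Fin m → Fin n → Bool) (k : ℕ) :
    SimpleGraph (Fin (n ^ k) ⊕ Fin (m ^ k)) :=
  splitGraph (morphIter A B k)


def emb {s m : ℕ} (p : Fin s → Fin m) : (k : ℕ) → Fin (s ^ k) → Fin (m ^ k)
  | 0, _ => ⟨0, by simp⟩
  | k + 1, i =>
    have hs : 0 < s := Nat.pos_of_ne_zero (fun h => by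
      have := i.isLt; simp [h] at this)
    have hR : i.val / s < s ^ k :=
      (Nat.div_lt_iff_lt_mul hs).2 (by rw [← pow_succ]; exact i.isLt)
    have hm : 0 < m := (p ⟨i.val % s, Nat.mod_lt _ hs⟩).isLt.trans_le' (Nat.zero_le _)
    ⟨(emb p k ⟨i.val / s, hR⟩).val * m + (p ⟨i.val % s, Nat.mod_lt _ hs⟩).val, by
      calc (emb p k ⟨i.val / s, hR⟩).val * m + (p ⟨i.val % s, Nat.mod_lt _ hs⟩).val
          < (emb p k ⟨i.val / s, hR⟩).val * m + m := by
            exact Nat.add_lt_add_left (p _).isLt _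
        _ = ((emb p k ⟨i.val / s, hR⟩).val + 1) * m := by ring
        _ ≤ m ^ k * m := Nat.mul_le_mul_right _ (emb p k ⟨i.val / s, hR⟩).isLt
        _ = m ^ (k + 1) := (pow_succ m k).symm⟩

lemma emb_succ_val {s m : ℕ} (p : Fin s → Fin m) (k : ℕ) (i : Fin (s ^ (k + 1)))
    (hs : 0 < s) (hR : i.val / s < s ^ k) :
    (emb p (k + 1) i).val
      = (emb p k ⟨i.val / s, hR⟩).val * m + (p ⟨i.val % s, Nat.mod_lt _ hs⟩).val := rfl

lemma emb_succ_div {s m : ℕ} (p : Fin s → Fin m) (k : ℕ) (i : Fin (s ^ (k + 1)))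
    (hs : 0 < s) (hm : 0 < m) (hR : i.val / s < s ^ k) :
    (emb p (k + 1) i).val / m = (emb p k ⟨i.val / s, hR⟩).val := by
  rw [emb_succ_val p k i hs hR, mul_comm, Nat.mul_add_div hm,
    Nat.div_eq_of_lt (p _).isLt, Nat.add_zero]

lemma emb_succ_mod {s m : ℕ} (p : Fin s → Fin m) (k : ℕ) (i : Fin (s ^ (k + 1)))
    (hs : 0 < s) (hR : i.val / s < s ^ k) :
    (emb p (k + 1) i).val % m = (p ⟨i.val % s, Nat.mod_lt _ hs⟩).val := by
  rw [emb_succ_val p k i hs hR, Nat.mul_add_mod', Nat.mod_eq_of_lt (p _).isLt]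

lemma morphIter_emb {m n s t : ℕ} (A B : Fin m → Fin n → Bool)
    (p : Fin s → Fin m) (q : Fin t → Fin n) :
    ∀ (k : ℕ) (i : Fin (s ^ k)) (j : Fin (t ^ k)),
      morphIter A B k (emb p k i) (emb q k j)
        = morphIter (fun i j => A (p i) (q j)) (fun i j => B (p i) (q j)) k i j
  | 0, _, _ => rfl
  | k + 1, i, j => by
    have hs : 0 < s := Nat.pos_of_ne_zero (fun h => by have := i.isLt; simp [h] at this)
    have ht : 0 < t := Nat.pos_of_ne_zero (fun h => by have := j.isLt; simp [h] at this)
    have hm : 0 < m := (p ⟨i.val % s, Nat.mod_lt _ hs⟩).isLt.trans_le' (Nat.zero_le _)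
    have hn : 0 < n := (q ⟨j.val % t, Nat.mod_lt _ ht⟩).isLt.trans_le' (Nat.zero_le _)
    have hRs : i.val / s < s ^ k := (Nat.div_lt_iff_lt_mul hs).2 (by rw [← pow_succ]; exact i.isLt)
    have hCt : j.val / t < t ^ k := (Nat.div_lt_iff_lt_mul ht).2 (by rw [← pow_succ]; exact j.isLt)
    have hRm : (emb p (k+1) i).val / m < m ^ k :=
      (Nat.div_lt_iff_lt_mul hm).2 (by rw [← pow_succ]; exact (emb p (k+1) i).isLt)
    have hCn : (emb q (k+1) j).val / n < n ^ k :=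
      (Nat.div_lt_iff_lt_mul hn).2 (by rw [← pow_succ]; exact (emb q (k+1) j).isLt)
    have e1 : (⟨(emb p (k+1) i).val / m, hRm⟩ : Fin (m ^ k)) = emb p k ⟨i.val / s, hRs⟩ :=
      Fin.ext (emb_succ_div p k i hs hm hRs)
    have e2 : (⟨(emb q (k+1) j).val / n, hCn⟩ : Fin (n ^ k)) = emb q k ⟨j.val / t, hCt⟩ :=
      Fin.ext (emb_succ_div q k j ht hn hCt)
    have e3 : (⟨(emb p (k+1) i).val % m, Nat.mod_lt _ hm⟩ : Fin m)
        = p ⟨i.val % s, Nat.mod_lt _ hs⟩ := Fin.ext (emb_succ_mod p k i hs hRs)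
    have e4 : (⟨(emb q (k+1) j).val % n, Nat.mod_lt _ hn⟩ : Fin n)
        = q ⟨j.val % t, Nat.mod_lt _ ht⟩ := Fin.ext (emb_succ_mod q k j ht hCt)
    show (if morphIter A B k ⟨(emb p (k+1) i).val / m, hRm⟩ ⟨(emb q (k+1) j).val / n, hCn⟩ then
        B ⟨(emb p (k+1) i).val % m, Nat.mod_lt _ hm⟩ ⟨(emb q (k+1) j).val % n, Nat.mod_lt _ hn⟩
      else
        A ⟨(emb p (k+1) i).val % m, Nat.mod_lt _ hm⟩ ⟨(emb q (k+1) j).val % n, Nat.mod_lt _ hn⟩)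
      = _
    rw [e1, e2, e3, e4, morphIter_emb A B p q k]
    rfl

lemma emb_injective {s m : ℕ} (p : Fin s → Fin m) (hp : Function.Injective p) :
    ∀ k : ℕ, Function.Injective (emb p k)
  | 0 => fun i j _ => Fin.ext (by
    have hi := i.isLt; have hj := j.isLt
    simp only [pow_zero, Nat.lt_one_iff] at hi hj
    rw [hi, hj])
  | k + 1 => fun i j hij => by
    have hs : 0 < s := Nat.pos_of_ne_zero (fun h => by have := i.isLt; simp [h] at this)
    have hm : 0 < m := (p ⟨i.val % s, Nat.mod_lt _ hs⟩).isLt.trans_le' (Nat.zero_le _)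
    have hRi : i.val / s < s ^ k := (Nat.div_lt_iff_lt_mul hs).2 (by rw [← pow_succ]; exact i.isLt)
    have hRj : j.val / s < s ^ k := (Nat.div_lt_iff_lt_mul hs).2 (by rw [← pow_succ]; exact j.isLt)
    have hv : (emb p (k+1) i).val = (emb p (k+1) j).val := congrArg Fin.val hij
    have hdiv : (emb p k ⟨i.val / s, hRi⟩).val = (emb p k ⟨j.val / s, hRj⟩).val := by
      rw [← emb_succ_div p k i hs hm hRi, ← emb_succ_div p k j hs hm hRj, hv]
    have hmod : (p ⟨i.val % s, Nat.mod_lt _ hs⟩).val = (p ⟨j.val % s, Nat.mod_lt _ hs⟩).val := by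
      rw [← emb_succ_mod p k i hs hRi, ← emb_succ_mod p k j hs hRj, hv]
    have h1 : i.val / s = j.val / s :=
      congrArg Fin.val (emb_injective p hp k (Fin.ext hdiv))
    have h2 : i.val % s = j.val % s :=
      congrArg Fin.val (hp (Fin.ext hmod))
    exact Fin.ext (by
      rw [← Nat.div_add_mod i.val s, ← Nat.div_add_mod j.val s, h1, h2])

/-- Induced-subgraph hereditary property of word-representability. -/
lemma wordRepresentable_of_induced {U V : Type*} [DecidableEq U] [DecidableEq V]
    (f : U → V) (hf : Function.Injective f) (G : SimpleGraph V) (H : SimpleGraph U)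
    (hadj : ∀ x y : U, G.Adj (f x) (f y) ↔ H.Adj x y)
    (hG : WordRepresentable G) : WordRepresentable H := by
  classical
  obtain ⟨w, hw1, hw2⟩ := hG
  set g : V → Option U := fun v => if h : ∃ u, f u = v then some h.choose else none with hgdef
  have hg2 : ∀ u : U, g (f u) = some u := by
    intro u
    have h : ∃ u', f u' = f u := ⟨u, rfl⟩
    simp only [hgdef, dif_pos h]
    exact congrArg some (hf h.choose_spec)
  have hg1 : ∀ v u, g v = some u → f u = v := by
    intro v u hvu
    by_cases h : ∃ u', f u' = v
    · simp only [hgdef, dif_pos h] at hvu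
      rw [← Option.some_inj.mp hvu]; exact h.choose_spec
    · exact absurd hvu (by simp only [hgdef, dif_neg h]; exact fun h' => by cases h')
  refine ⟨w.filterMap g, ?_, ?_⟩
  · intro u
    exact List.mem_filterMap.mpr ⟨f u, hw1 (f u), hg2 u⟩
  · intro x y hxy
    have hkey : ∀ w' : List V,
        ((w'.filterMap g).filter (fun z => z == x || z == y)).map f
          = w'.filter (fun z => z == f x || z == f y) := by
      intro w'
      induction w' with
      | nil => rfl
      | cons v w' ih =>
        rcases hgv : g v with _ | u
        · have hx : ¬ (v = f x) := fun h => by rw [h, hg2] at hgv; cases hgv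
          have hy : ¬ (v = f y) := fun h => by rw [h, hg2] at hgv; cases hgv
          simp [List.filterMap_cons, hgv, List.filter_cons, hx, hy, ih]
        · have hfu : f u = v := hg1 v u hgv
          subst hfu
          have hpred : ((f u == f x || f u == f y)) = ((u == x || u == y)) := by
            rw [Bool.eq_iff_iff]
            simp [hf.eq_iff]
          by_cases hu : (u == x || u == y) = true
          · simp [List.filterMap_cons, hgv, List.filter_cons, hpred, hu, ih]
          · simp [List.filterMap_cons, hgv, List.filter_cons, hpred, hu, ih]
    have hfxy : f x ≠ f y := fun h => hxy (hf h)
    rw [← hadj x y, hw2 (f x) (f y) hfxy, ← hkey w]; simp only [List.Chain', List.isChain_map]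
    constructor <;> intro hc <;> refine hc.imp ?_ <;> intro a b hab
    · exact fun h => hab (congrArg f h)
    · exact fun h => hab (hf h)


theorem stmt10 {m n s t : ℕ} (A B : Fin m → Fin n → Bool)
    (p : Fin s → Fin m) (q : Fin t → Fin n)
    (hp : StrictMono p) (hq : StrictMono q)
    (k : ℕ) (hk : 1 ≤ k)
    (h : ¬ WordRepresentable
      (Gk (fun i j => A (p i) (q j)) (fun i j => B (p i) (q j)) k)) :
    ¬ WordRepresentable (Gk A B k) := by
  intro hAB
  apply h
  refine wordRepresentable_of_induced (Sum.map (emb q k) (emb p k)) ?_ _ _ ?_ hAB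
  · exact Function.Injective.sumMap (emb_injective q hq.injective k)
      (emb_injective p hp.injective k)
  · intro x y
    rcases x with a | a <;> rcases y with b | b <;>
      simp [Gk, splitGraph, SimpleGraph.fromRel_adj, morphIter_emb,
        (emb_injective q hq.injective k).eq_iff, (emb_injective p hp.injective k).eq_iff]
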